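/- Assume hypotheses (H1) and (H2). Then the set of metastable configurations X_meta = {η ∈ X ∖ X_stab : V_η = max_{ξ ∈ X∖X_stab} V_ξ} equals {□}, and the maximal stability level Γ = max_{ξ ∈ X∖X_stab} V_ξ equals Γ*. -/

import Mathlib

open scoped Classical

variable {X : Type*}

/-- `ω` (restricted to 0,…,L) is a path of allowed moves from `a` to `b`. -/
def IsPathW (rel : X → X → Prop) (a b : X) (L : ℕ) (ω : ℕ → X) : Prop :=
  ω 0 = a ∧ ω L = b ∧ ∀ i < L, rel (ω i) (ω (i + 1))

/-- The maximal energy along the path `ω = (ω 0, …, ω L)`. -/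
noncomputable def pathMax (H : X → ℝ) (L : ℕ) (ω : ℕ → X) : ℝ :=
  (Finset.range (L + 1)).sup' ⟨0, Finset.mem_range.mpr (Nat.succ_pos L)⟩ fun i => H (ω i)

/-- Communication height Φ(a,b) between two configurations. -/
noncomputable def commH (rel : X → X → Prop) (H : X → ℝ) (a b : X) : ℝ :=
  sInf { m : ℝ | ∃ L ω, IsPathW rel a b L ω ∧ m = pathMax H L ω }

/-- Communication height Φ(A,B) between two sets of configurations. -/
noncomputable def commHS (rel : X → X → Prop) (H : X → ℝ) (A B : Set X) : ℝ :=
  sInf { m : ℝ | ∃ a ∈ A, ∃ b ∈ B, m = commH rel H a b }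

/-- The graph (X,∼) is connected. -/
def ConnGraph (rel : X → X → Prop) : Prop :=
  ∀ a b : X, ∃ L ω, IsPathW rel a b L ω

-- auxiliary lemmas
lemma le_pathMax (H : X → ℝ) (L : ℕ) (ω : ℕ → X) {i : ℕ} (hi : i ≤ L) :
    H (ω i) ≤ pathMax H L ω := by
  unfold pathMax
  exact Finset.le_sup' (fun i => H (ω i)) (Finset.mem_range.2 (Nat.lt_succ_of_le hi))

lemma pathSet_finite [Fintype X] (rel : X → X → Prop) (H : X → ℝ) (a b : X) :
    { m : ℝ | ∃ L ω, IsPathW rel a b L ω ∧ m = pathMax H L ω }.Finite := by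
  apply Set.Finite.subset (Set.finite_range H)
  rintro m ⟨L, ω, _, rfl⟩
  obtain ⟨i, _, heq⟩ := Finset.exists_mem_eq_sup' (Finset.nonempty_range_add_one (n := L))
    (fun i => H (ω i))
  exact ⟨ω i, heq.symm⟩

lemma commH_mem [Fintype X] (rel : X → X → Prop) (H : X → ℝ) (hconn : ConnGraph rel) (a b : X) :
    ∃ L ω, IsPathW rel a b L ω ∧ commH rel H a b = pathMax H L ω := by
  have hne : { m : ℝ | ∃ L ω, IsPathW rel a b L ω ∧ m = pathMax H L ω }.Nonempty := by
    obtain ⟨L, ω, h⟩ := hconn a b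
    exact ⟨pathMax H L ω, L, ω, h, rfl⟩
  exact hne.csInf_mem (pathSet_finite rel H a b)

lemma commH_le_pathMax [Fintype X] (rel : X → X → Prop) (H : X → ℝ) {a b : X} {L : ℕ} {ω : ℕ → X}
    (h : IsPathW rel a b L ω) : commH rel H a b ≤ pathMax H L ω :=
  csInf_le (pathSet_finite rel H a b).bddBelow ⟨L, ω, h, rfl⟩

lemma H_left_le_commH [Fintype X] (rel : X → X → Prop) (H : X → ℝ) (hconn : ConnGraph rel) (a b : X) :
    H a ≤ commH rel H a b := by
  obtain ⟨L, ω, hp, heq⟩ := commH_mem rel H hconn a b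
  rw [heq]
  have := le_pathMax H L ω (Nat.zero_le L)
  rwa [hp.1] at this

lemma H_right_le_commH [Fintype X] (rel : X → X → Prop) (H : X → ℝ) (hconn : ConnGraph rel) (a b : X) :
    H b ≤ commH rel H a b := by
  obtain ⟨L, ω, hp, heq⟩ := commH_mem rel H hconn a b
  rw [heq]
  have := le_pathMax H L ω (le_refl L)
  rwa [hp.2.1] at this

lemma commH_self_le [Fintype X] (rel : X → X → Prop) (H : X → ℝ) (a : X) :
    commH rel H a a ≤ H a := by
  have hp : IsPathW rel a a 0 (fun _ => a) := ⟨rfl, rfl, fun i hi => absurd hi (by omega)⟩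
  have := commH_le_pathMax rel H hp
  simpa [pathMax] using this

lemma commH_triangle [Fintype X] (rel : X → X → Prop) (H : X → ℝ) (hconn : ConnGraph rel) (a b c : X) :
    commH rel H a c ≤ max (commH rel H a b) (commH rel H b c) := by
  obtain ⟨L₁, ω₁, hp₁, he₁⟩ := commH_mem rel H hconn a b
  obtain ⟨L₂, ω₂, hp₂, he₂⟩ := commH_mem rel H hconn b c
  set ω : ℕ → X := fun i => if i ≤ L₁ then ω₁ i else ω₂ (i - L₁) with hω
  have hagree : ω₁ L₁ = ω₂ 0 := by rw [hp₁.2.1, hp₂.1]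
  have hpath : IsPathW rel a c (L₁ + L₂) ω := by
    refine ⟨by simp [hω, hp₁.1], ?_, ?_⟩
    · by_cases hL₂ : L₂ = 0
      · subst hL₂
        simp only [hω, Nat.add_zero, le_refl, if_pos]
        rw [hagree]; exact hp₂.2.1
      · have : ¬ (L₁ + L₂ ≤ L₁) := by omega
        simp only [hω, this, if_false]
        rw [Nat.add_sub_cancel_left]; exact hp₂.2.1
    · intro i hi
      by_cases h : i < L₁
      · have h1 : i ≤ L₁ := h.le
        have h2 : i + 1 ≤ L₁ := h
        simp only [hω, h1, h2, if_pos]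
        exact hp₁.2.2 i h
      · have h1 : ¬ (i + 1 ≤ L₁) := by omega
        have h3 : i + 1 - L₁ = (i - L₁) + 1 := by omega
        have hstep := hp₂.2.2 (i - L₁) (by omega)
        by_cases h2 : i ≤ L₁
        · have hiL : i = L₁ := by omega
          simp only [hω, h2, if_pos, h1, if_false, h3]
          rw [hiL, hagree]
          simpa [hiL] using hstep
        · simp only [hω, h2, h1, if_false, h3]
          exact hstep
  refine (commH_le_pathMax rel H hpath).trans ?_
  apply Finset.sup'_le
  intro i hi
  rw [Finset.mem_range] at hi
  by_cases h : i ≤ L₁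
  · simp only [hω, h, if_pos]
    exact le_trans (le_pathMax H L₁ ω₁ h) (he₁ ▸ le_max_left _ _)
  · simp only [hω, h, if_false]
    exact le_trans (le_pathMax H L₂ ω₂ (by omega)) (he₂ ▸ le_max_right _ _)

lemma commHS_singleton_set (rel : X → X → Prop) (H : X → ℝ) (η : X) (A : Set X) :
    { m : ℝ | ∃ a ∈ ({η} : Set X), ∃ b ∈ A, m = commH rel H a b }
      = (fun b => commH rel H η b) '' A := by
  ext m
  constructor
  · rintro ⟨a, ha, b, hb, rfl⟩
    rcases ha with rfl
    exact ⟨b, hb, rfl⟩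
  · rintro ⟨b, hb, rfl⟩
    exact ⟨η, rfl, b, hb, rfl⟩

lemma commHS_singleton_mem [Fintype X] (rel : X → X → Prop) (H : X → ℝ) (η : X) {A : Set X}
    (hA : A.Nonempty) : ∃ b ∈ A, commHS rel H {η} A = commH rel H η b := by
  have hfin : ((fun b => commH rel H η b) '' A).Finite := A.toFinite.image _
  have hne : ((fun b => commH rel H η b) '' A).Nonempty := hA.image _
  have := hne.csInf_mem hfin
  obtain ⟨b, hb, heq⟩ := this
  exact ⟨b, hb, by rw [commHS, commHS_singleton_set]; exact heq.symm⟩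

lemma commHS_singleton_le [Fintype X] (rel : X → X → Prop) (H : X → ℝ) (η : X) {A : Set X}
    {b : X} (hb : b ∈ A) : commHS rel H {η} A ≤ commH rel H η b := by
  rw [commHS, commHS_singleton_set]
  exact csInf_le (A.toFinite.image _).bddBelow ⟨b, hb, rfl⟩

/-- The stability level V_η ∈ (−∞,∞], equal to Φ(η,I_η) − H(η) if
I_η = {ξ : H(ξ) < H(η)} is nonempty and +∞ otherwise. -/
noncomputable def Vlev (rel : X → X → Prop) (H : X → ℝ) (η : X) : EReal :=
  if ({ξ : X | H ξ < H η}).Nonempty then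
    ((commHS rel H {η} {ξ : X | H ξ < H η} - H η : ℝ) : EReal)
  else ⊤

/-- under (H1)–(H2), X_meta = {□} and Γ = Γ*. -/
theorem stmt_10 [Fintype X] (rel : X → X → Prop) (H : X → ℝ)
    (hsymm : Symmetric rel) (hconn : ConnGraph rel)
    (sq bx : X) (hne : sq ≠ bx) (Hsq : H sq = 0)
    -- (H1): X_stab = {⊞}
    (hH1 : {η : X | ∀ ξ, H η ≤ H ξ} = {bx})
    -- (H2): ∃ V* < Γ* with V_η ≤ V* for all η ∉ {□,⊞}
    (hH2 : ∃ Vs : ℝ, Vs < commH rel H sq bx - H sq ∧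
      ∀ η : X, η ≠ sq → η ≠ bx →
        ({ξ : X | H ξ < H η}).Nonempty ∧
        commHS rel H {η} {ξ : X | H ξ < H η} - H η ≤ Vs) :
    -- X_meta = {□}
    {η : X | η ∉ {σ : X | ∀ ξ, H σ ≤ H ξ} ∧
      ∀ ζ ∉ {σ : X | ∀ ξ, H σ ≤ H ξ}, Vlev rel H ζ ≤ Vlev rel H η} = {sq} ∧
    -- Γ = max over X ∖ X_stab of V equals Γ*
    sSup (Vlev rel H '' {σ : X | ∀ ξ, H σ ≤ H ξ}ᶜ)
      = ((commH rel H sq bx - H sq : ℝ) : EReal) := by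
  obtain ⟨Vs, hVs, hVsub⟩ := hH2
  set G : ℝ := commH rel H sq bx with hGdef
  -- basic facts from (H1)
  have hbx_min : ∀ ξ, H bx ≤ H ξ := by
    have : bx ∈ {η : X | ∀ ξ, H η ≤ H ξ} := by rw [hH1]; rfl
    exact this
  have huniq : ∀ σ : X, (∀ ξ, H σ ≤ H ξ) → σ = bx := by
    intro σ hσ
    have : σ ∈ {η : X | ∀ ξ, H η ≤ H ξ} := hσ
    rwa [hH1] at this
  have hHbx : H bx < H sq := by
    rcases lt_or_eq_of_le (hbx_min sq) with h | h
    · exact h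
    · exact absurd (huniq sq (fun ξ => h ▸ hbx_min ξ)) hne
  have hG0 : (0 : ℝ) ≤ G := Hsq ▸ H_left_le_commH rel H hconn sq bx
  have hVsG : Vs < G := by rw [Hsq] at hVs; linarith
  -- Claim C by strong induction on the number of lower-energy states
  have claimC : ∀ n : ℕ, ∀ ξ : X,
      (Finset.univ.filter (fun ζ => H ζ < H ξ)).card ≤ n →
      H ξ < H sq → commH rel H ξ bx ≤ H ξ + max Vs 0 := by
    intro n
    induction n with
    | zero =>
      intro ξ hcard hξ
      have hempty : (Finset.univ.filter (fun ζ => H ζ < H ξ)) = ∅ :=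
        Finset.card_eq_zero.1 (Nat.le_zero.1 hcard)
      have hmin : ∀ ζ, H ξ ≤ H ζ := by
        intro ζ
        by_contra hlt
        have : ζ ∈ Finset.univ.filter (fun ζ => H ζ < H ξ) := by
          simp [not_le.1 hlt]
        rw [hempty] at this
        exact absurd this (Finset.notMem_empty ζ)
      have hξbx : ξ = bx := huniq ξ hmin
      rw [hξbx]
      have := commH_self_le rel H bx
      have h0 : (0:ℝ) ≤ max Vs 0 := le_max_right _ _
      linarith
    | succ n ih =>
      intro ξ hcard hξ
      by_cases hξbx : ξ = bx
      · rw [hξbx]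
        have := commH_self_le rel H bx
        have h0 : (0:ℝ) ≤ max Vs 0 := le_max_right _ _
        linarith
      · have hξsq : ξ ≠ sq := fun h => absurd (h ▸ hξ) (lt_irrefl _)
        obtain ⟨hIne, hle⟩ := hVsub ξ hξsq hξbx
        obtain ⟨ξ', hξ'mem, heq⟩ := commHS_singleton_mem rel H ξ hIne
        have hlt : H ξ' < H ξ := hξ'mem
        have h1 : commH rel H ξ ξ' ≤ H ξ + Vs := by rw [← heq]; linarith
        have hsub : (Finset.univ.filter (fun ζ => H ζ < H ξ'))
            ⊂ (Finset.univ.filter (fun ζ => H ζ < H ξ)) := by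
          constructor
          · intro ζ hζ
            simp only [Finset.mem_filter, Finset.mem_univ, true_and] at hζ ⊢
            exact hζ.trans hlt
          · intro hcont
            have : ξ' ∈ Finset.univ.filter (fun ζ => H ζ < H ξ) := by simp [hlt]
            have h6 := hcont this
            simp at h6
        have hcard' : (Finset.univ.filter (fun ζ => H ζ < H ξ')).card ≤ n := by
          have := Finset.card_lt_card hsub
          omega
        have h2 := ih ξ' hcard' (hlt.trans hξ)
        have h3 := commH_triangle rel H hconn ξ ξ' bx
        have h4 : Vs ≤ max Vs 0 := le_max_left _ _
        calc commH rel H ξ bx ≤ max (commH rel H ξ ξ') (commH rel H ξ' bx) := h3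
          _ ≤ H ξ + max Vs 0 := by
            apply max_le
            · linarith
            · linarith
  have keyC : ∀ ξ : X, H ξ < H sq → commH rel H ξ bx < G := by
    intro ξ hξ
    have h1 := claimC _ ξ le_rfl hξ
    have h2 : max Vs 0 ≤ G := max_le hVsG.le hG0
    rw [Hsq] at hξ
    linarith
  have keyG : ∀ ξ : X, H ξ < H sq → G ≤ commH rel H sq ξ := by
    intro ξ hξ
    have h1 := commH_triangle rel H hconn sq ξ bx
    rcases max_cases (commH rel H sq ξ) (commH rel H ξ bx) with ⟨he, _⟩ | ⟨he, _⟩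
    · rw [he] at h1; exact h1
    · rw [he] at h1
      exact absurd (lt_of_le_of_lt h1 (keyC ξ hξ)) (lt_irrefl _)
  have hIsq : ({ξ : X | H ξ < H sq}).Nonempty := ⟨bx, hHbx⟩
  have hΦsq : commHS rel H {sq} {ξ : X | H ξ < H sq} = G := by
    apply le_antisymm
    · exact commHS_singleton_le rel H sq hHbx
    · obtain ⟨b, hb, heq⟩ := commHS_singleton_mem rel H sq hIsq
      rw [heq]
      exact keyG b hb
  have hVsq : Vlev rel H sq = ((G - H sq : ℝ) : EReal) := by
    rw [Vlev, if_pos hIsq, hΦsq]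
  have hstab : {σ : X | ∀ ξ, H σ ≤ H ξ} = {bx} := hH1
  have hnotstab : ∀ ζ : X, ζ ∉ {σ : X | ∀ ξ, H σ ≤ H ξ} ↔ ζ ≠ bx := by
    intro ζ
    rw [hstab]
    exact Iff.rfl
  have hVother : ∀ ζ : X, ζ ≠ sq → ζ ≠ bx → Vlev rel H ζ ≤ ((Vs : ℝ) : EReal) := by
    intro ζ h1 h2
    obtain ⟨hIne, hle⟩ := hVsub ζ h1 h2
    rw [Vlev, if_pos hIne]
    exact_mod_cast hle
  have hVsle : ((Vs : ℝ) : EReal) ≤ ((G - H sq : ℝ) : EReal) := by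
    exact_mod_cast (by rw [Hsq]; linarith : Vs ≤ G - H sq)
  have hVslt : ((Vs : ℝ) : EReal) < ((G - H sq : ℝ) : EReal) := by
    exact_mod_cast hVs
  constructor
  · ext η
    simp only [Set.mem_setOf_eq, Set.mem_singleton_iff]
    constructor
    · rintro ⟨hη1, hη2⟩
      by_contra hηsq
      have hηbx : η ≠ bx := (hnotstab η).1 hη1
      have h1 : Vlev rel H sq ≤ Vlev rel H η := hη2 sq ((hnotstab sq).2 hne)
      have h2 : Vlev rel H η ≤ ((Vs : ℝ) : EReal) := hVother η hηsq hηbx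
      rw [hVsq] at h1
      exact absurd (lt_of_lt_of_le hVslt (le_trans h1 h2)) (lt_irrefl _)
    · intro hh
      rw [hh]
      refine ⟨(hnotstab sq).2 hne, ?_⟩
      intro ζ hζ
      have hζbx : ζ ≠ bx := (hnotstab ζ).1 hζ
      by_cases hζsq : ζ = sq
      · rw [hζsq]
      · rw [hVsq]
        exact le_trans (hVother ζ hζsq hζbx) hVsle
  · apply le_antisymm
    · apply sSup_le
      rintro x ⟨η, hη, rfl⟩
      rw [Set.mem_compl_iff] at hη
      have hηbx : η ≠ bx := (hnotstab η).1 hη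
      by_cases hηsq : η = sq
      · rw [hηsq, hVsq]
      · exact le_trans (hVother η hηsq hηbx) hVsle
    · rw [← hVsq]
      apply le_sSup
      exact ⟨sq, Set.mem_compl ((hnotstab sq).2 hne), rfl⟩
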